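/- With ψ_asymp = ψ₀ - (3/(2Λ)) r⁻² Δ̃ψ₀ + r⁻³ ψ₃ (coefficients r-independent, C⁴ and C² respectively), the Schwarzschild-de Sitter wave operator satisfies the pointwise bound |□_g ψ_asymp| ≤ C r⁻⁴ Σ_{|α|≤4} |∇̃^α ψ₀| + C r⁻⁵ Σ_{|α|≤2} |∇̃^α ψ₃| for all r ≥ r₀ > r_C, with C depending only on Λ, m, r₀. -/

import Mathlib

noncomputable section

/-- The unit sphere `S² ⊂ ℝ³`. -/
abbrev S2 : Type := Metric.sphere (0 : EuclideanSpace ℝ (Fin 3)) 1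

/-- Second `t`-derivative of a function on the cylinder `ℝ×S²`. -/
def tdd (f : ℝ → S2 → ℝ) : ℝ → S2 → ℝ := fun t ω => deriv (deriv (fun s => f s ω)) t

/-- The conformal boundary Laplacian `Δ̃ = (3/Λ)∂_t² + Δ_{S²}`, with the
spherical Laplacian modelled by a linear operator `ΔS`. -/
def tLap (Λ : ℝ) (ΔS : (ℝ → S2 → ℝ) →ₗ[ℝ] (ℝ → S2 → ℝ)) (f : ℝ → S2 → ℝ) :
    ℝ → S2 → ℝ := fun t ω => (3 / Λ) * tdd f t ω + ΔS f t ω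

/-- The Schwarzschild-de Sitter wave operator
`□_g ψ = φ²∂_t²ψ - r⁻²∂_r(r²φ⁻²∂_rψ) + r⁻²Δ_{S²}ψ`, `φ⁻² = Λr²/3 - 1 + 2m/r`. -/
def BoxSdS (Λ m : ℝ) (ΔS : (ℝ → S2 → ℝ) →ₗ[ℝ] (ℝ → S2 → ℝ))
    (ψ : ℝ → ℝ → S2 → ℝ) (r t : ℝ) (ω : S2) : ℝ :=
  (Λ * r ^ 2 / 3 - 1 + 2 * m / r)⁻¹ * tdd (ψ r) t ω
    - (1 / r ^ 2) * deriv (fun s : ℝ =>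
        s ^ 2 * (Λ * s ^ 2 / 3 - 1 + 2 * m / s) * deriv (fun u => ψ u t ω) s) r
    + (1 / r ^ 2) * ΔS (ψ r) t ω

/- ### Auxiliary lemmas -/

lemma abs_add9' (x1 x2 x3 x4 x5 x6 x7 x8 x9 : ℝ) :
    |x1+x2+x3+x4+x5+x6+x7+x8+x9| ≤ |x1|+|x2|+|x3|+|x4|+|x5|+|x6|+|x7|+|x8|+|x9| := by
  have h2 := abs_add_le x1 x2
  have h3 := abs_add_le (x1+x2) x3
  have h4 := abs_add_le (x1+x2+x3) x4
  have h5 := abs_add_le (x1+x2+x3+x4) x5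
  have h6 := abs_add_le (x1+x2+x3+x4+x5) x6
  have h7 := abs_add_le (x1+x2+x3+x4+x5+x6) x7
  have h8 := abs_add_le (x1+x2+x3+x4+x5+x6+x7) x8
  have h9 := abs_add_le (x1+x2+x3+x4+x5+x6+x7+x8) x9
  linarith

lemma deriv_diff_of_contDiff_two' {f : ℝ → ℝ} (hf : ContDiff ℝ 2 f) :
    Differentiable ℝ (deriv f) := by
  have h : ContDiff ℝ (1+1) f := by norm_num; exact hf
  exact (contDiff_succ_iff_deriv.mp h).2.2.differentiable one_ne_zero

lemma deriv2_comb' {f g h : ℝ → ℝ} (p q : ℝ) (hf : ContDiff ℝ 2 f) (hg : ContDiff ℝ 2 g)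
    (hh : ContDiff ℝ 2 h) (t : ℝ) :
    deriv (deriv (fun s => f s + p * g s + q * h s)) t
      = deriv (deriv f) t + p * deriv (deriv g) t + q * deriv (deriv h) t := by
  have hf1 := hf.differentiable two_ne_zero
  have hg1 := hg.differentiable two_ne_zero
  have hh1 := hh.differentiable two_ne_zero
  have e1 : deriv (fun s => f s + p * g s + q * h s)
      = fun s => deriv f s + p * deriv g s + q * deriv h s := by
    funext s
    rw [deriv_fun_add ((hf1 s).fun_add ((hg1 s).const_mul p)) ((hh1 s).const_mul q),
      deriv_fun_add (hf1 s) ((hg1 s).const_mul p), deriv_const_mul p (hg1 s),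
      deriv_const_mul q (hh1 s)]
  rw [e1]
  have hf2 := deriv_diff_of_contDiff_two' hf
  have hg2 := deriv_diff_of_contDiff_two' hg
  have hh2 := deriv_diff_of_contDiff_two' hh
  rw [deriv_fun_add ((hf2 t).fun_add ((hg2 t).const_mul p)) ((hh2 t).const_mul q),
    deriv_fun_add (hf2 t) ((hg2 t).const_mul p), deriv_const_mul p (hg2 t),
    deriv_const_mul q (hh2 t)]

lemma inner_deriv' (A cLv B : ℝ) {s : ℝ} (hs : s ≠ 0) :
    deriv (fun u : ℝ => A - cLv / u ^ 2 + B / u ^ 3) s = 2 * cLv / s ^ 3 - 3 * B / s ^ 4 := by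
  have hi2 := (hasDerivAt_pow 2 s).inv (pow_ne_zero 2 hs)
  have hi3 := (hasDerivAt_pow 3 s).inv (pow_ne_zero 3 hs)
  have H := ((hasDerivAt_const s A).sub (hi2.const_mul cLv)).add (hi3.const_mul B)
  have H1 : HasDerivAt (fun u : ℝ => A - cLv / u ^ 2 + B / u ^ 3) _ s :=
    H.congr_of_eventuallyEq (Filter.Eventually.of_forall fun u => by
      simp only [Pi.add_apply, Pi.sub_apply, Pi.mul_apply, Pi.inv_apply]; ring)
  rw [H1.deriv]
  push_cast
  field_simp
  ring

lemma outer_deriv' (Λ m cLv B : ℝ) {r : ℝ} (hr : r ≠ 0) :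
    deriv (fun s : ℝ =>
        s ^ 2 * (Λ * s ^ 2 / 3 - 1 + 2 * m / s) * (2 * cLv / s ^ 3 - 3 * B / s ^ 4)) r
      = 2 * cLv * Λ / 3 + 2 * cLv / r ^ 2 - (6 * B + 8 * m * cLv) / r ^ 3
          + 18 * m * B / r ^ 4 := by
  have hw1 := (((hasDerivAt_pow 2 r).const_mul Λ).div_const 3 |>.sub_const 1).add
    ((hasDerivAt_inv hr).const_mul (2 * m))
  have hq := ((((hasDerivAt_pow 3 r).inv (pow_ne_zero 3 hr)).const_mul (2 * cLv)).sub
    (((hasDerivAt_pow 4 r).inv (pow_ne_zero 4 hr)).const_mul (3 * B)))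
  have hG0 := ((hasDerivAt_pow 2 r).mul hw1).mul hq
  have hG : HasDerivAt (fun s : ℝ =>
      s ^ 2 * (Λ * s ^ 2 / 3 - 1 + 2 * m / s) * (2 * cLv / s ^ 3 - 3 * B / s ^ 4)) _ r :=
    hG0.congr_of_eventuallyEq (Filter.Eventually.of_forall fun u => by
      simp only [Pi.add_apply, Pi.sub_apply, Pi.mul_apply, Pi.inv_apply]; ring)
  rw [hG.deriv]
  simp only [Pi.add_apply, Pi.sub_apply, Pi.mul_apply, Pi.inv_apply]
  push_cast
  field_simp
  ring

lemma w_lower_bound' (Λ m r₀ : ℝ) (hΛ : 0 < Λ) (hm : 0 < m)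
    (hsub : 3 * m * Real.sqrt Λ < 1) (hr₀ : 0 < r₀)
    (hw : ∀ s ≥ r₀, 0 < Λ * s ^ 2 / 3 - 1 + 2 * m / s) :
    ∀ r ≥ r₀, (Λ * r₀ ^ 2 / 3 - 1 + 2 * m / r₀) / r₀ ^ 2 * r ^ 2
        ≤ Λ * r ^ 2 / 3 - 1 + 2 * m / r := by
  have h9 : 9 * m ^ 2 * Λ < 1 := by
    nlinarith [Real.sq_sqrt hΛ.le, Real.sqrt_nonneg Λ,
      mul_nonneg (mul_nonneg (by norm_num : (0:ℝ) ≤ 3) hm.le) (Real.sqrt_nonneg Λ)]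
  have h3m : 3 * m < r₀ := by
    by_contra hcon
    push_neg at hcon
    have h := hw (3 * m) hcon
    have hm3 : (0:ℝ) < 3 * m := by positivity
    have e : 2 * m / (3 * m) = 2 / 3 := by field_simp
    rw [e] at h
    nlinarith
  intro r hr
  have hrpos : 0 < r := lt_of_lt_of_le hr₀ hr
  have key : (Λ * r₀ ^ 3 - 3 * r₀ + 6 * m) * r ^ 3 ≤ (Λ * r ^ 3 - 3 * r + 6 * m) * r₀ ^ 3 := by
    nlinarith [mul_nonneg (sub_nonneg.2 hr) (sub_nonneg.2 h3m.le),
      mul_pos hrpos hr₀, sq_nonneg (r - r₀), sq_nonneg (r + r₀),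
      mul_nonneg (mul_nonneg (sub_nonneg.2 hr) (sub_nonneg.2 hr)) hr₀.le,
      mul_nonneg (mul_nonneg (sub_nonneg.2 hr) (sub_nonneg.2 h3m.le)) (mul_pos hrpos hr₀).le,
      mul_nonneg (mul_nonneg (sub_nonneg.2 hr) hm.le) (mul_pos hrpos hr₀).le,
      mul_nonneg (mul_nonneg (sub_nonneg.2 hr) (sub_nonneg.2 hr)) hm.le]
  have e : ∀ s : ℝ, 0 < s →
      Λ * s ^ 2 / 3 - 1 + 2 * m / s = (Λ * s ^ 3 - 3 * s + 6 * m) / (3 * s) := by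
    intro s hs
    field_simp
    ring
  rw [e r hrpos, e r₀ hr₀, div_div, div_mul_eq_mul_div,
    div_le_div_iff₀ (by positivity) (by positivity)]
  nlinarith [key]

set_option maxHeartbeats 1000000 in
lemma total_bound' (Λ m r₀ r k c C W A a2 Lv l2 SL B b2 S3 : ℝ)
    (hΛ : 0 < Λ) (hm : 0 < m) (hr₀ : 0 < r₀) (hr : r ≥ r₀) (hrpos : 0 < r)
    (hk : 0 < k) (hc : 0 < c) (hWpos : 0 < W) (hWk : k * r ^ 2 ≤ W)
    (hCdef : C = (3 + 6 * m / r₀) / (Λ * k) + c / k + 1 / k + 3 / Λ + 6 + 12 * m / (Λ * r₀)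
      + 18 * m / r₀ + c + 1) :
    |(3 - 6 * m / r) / (Λ * r ^ 2 * W) * a2
        + -(c / (W * r ^ 2) * l2)
        + 1 / (W * r ^ 3) * b2
        + -(3 / (Λ * r ^ 4) * Lv)
        + 6 * B / r ^ 5
        + 12 * m / Λ * Lv / r ^ 5
        + -(18 * m * B / r ^ 6)
        + -(c / r ^ 4 * SL)
        + S3 / r ^ 5|
      ≤ C / r ^ 4 * (|A| + |a2| + |Lv| + |l2| + |SL|) + C / r ^ 5 * (|B| + |b2| + |S3|) := by
  have hc1 : 0 < (3 + 6 * m / r₀) / (Λ * k) := div_pos (by positivity) (mul_pos hΛ hk)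
  have hc2 : 0 < c / k := div_pos hc hk
  have hc3 : 0 < 1 / k := by positivity
  have hc4 : 0 < 3 / Λ := by positivity
  have hc6 : 0 < 12 * m / (Λ * r₀) := by positivity
  have hc7 : 0 < 18 * m / r₀ := by positivity
  have hC : 0 < C := by rw [hCdef]; linarith
  -- positivity facts
  have hr2 : (0:ℝ) < r ^ 2 := pow_pos hrpos 2
  have hr3 : (0:ℝ) < r ^ 3 := pow_pos hrpos 3
  have hr4 : (0:ℝ) < r ^ 4 := pow_pos hrpos 4
  have hr5 : (0:ℝ) < r ^ 5 := pow_pos hrpos 5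
  have hΛr2W : 0 < Λ * r ^ 2 * W := by positivity
  have hWr2 : 0 < W * r ^ 2 := by positivity
  have hWr3 : 0 < W * r ^ 3 := by positivity
  -- denominator comparisons
  have hden1 : Λ * k * r ^ 4 ≤ Λ * r ^ 2 * W := by
    nlinarith [mul_le_mul_of_nonneg_left hWk (by positivity : (0:ℝ) ≤ Λ * r ^ 2)]
  have hden2 : k * r ^ 4 ≤ W * r ^ 2 := by
    nlinarith [mul_le_mul_of_nonneg_right hWk hr2.le]
  have hden3 : k * r ^ 5 ≤ W * r ^ 3 := by
    nlinarith [mul_le_mul_of_nonneg_right hWk hr3.le]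
  have habs6 : |3 - 6 * m / r| ≤ 3 + 6 * m / r₀ := by
    have h6a : (0:ℝ) < 6 * m / r := by positivity
    have h6b : 6 * m / r ≤ 6 * m / r₀ := by gcongr <;> linarith
    rw [abs_le]
    constructor <;> nlinarith
  -- the nine term bounds
  have hb1 : |(3 - 6 * m / r) / (Λ * r ^ 2 * W) * a2|
      ≤ (3 + 6 * m / r₀) / (Λ * k) / r ^ 4 * |a2| := by
    rw [abs_mul, abs_div, abs_of_pos hΛr2W, div_div]
    exact mul_le_mul_of_nonneg_right
      (div_le_div₀ (by positivity) habs6 (by positivity) hden1) (abs_nonneg _)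
  have hb2 : |-(c / (W * r ^ 2) * l2)| ≤ c / k / r ^ 4 * |l2| := by
    rw [abs_neg, abs_mul, abs_div, abs_of_pos hc, abs_of_pos hWr2, div_div]
    exact mul_le_mul_of_nonneg_right
      (div_le_div₀ hc.le le_rfl (by positivity) hden2) (abs_nonneg _)
  have hb3 : |1 / (W * r ^ 3) * b2| ≤ 1 / k / r ^ 5 * |b2| := by
    rw [abs_mul, abs_div, abs_one, abs_of_pos hWr3, div_div]
    exact mul_le_mul_of_nonneg_right
      (div_le_div₀ zero_le_one le_rfl (by positivity) hden3) (abs_nonneg _)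
  have hb4 : |-(3 / (Λ * r ^ 4) * Lv)| ≤ 3 / Λ / r ^ 4 * |Lv| := by
    rw [abs_neg, abs_mul, abs_div, abs_of_pos (by norm_num : (0:ℝ) < 3),
      abs_of_pos (by positivity : (0:ℝ) < Λ * r ^ 4), div_div]
  have hb5 : |6 * B / r ^ 5| ≤ 6 / r ^ 5 * |B| := by
    have e : |6 * B / r ^ 5| = 6 / r ^ 5 * |B| := by
      rw [abs_div, abs_mul, abs_of_pos (by norm_num : (0:ℝ) < 6), abs_of_pos hr5]
      ring
    exact e.le
  have hb6 : |12 * m / Λ * Lv / r ^ 5| ≤ 12 * m / (Λ * r₀) / r ^ 4 * |Lv| := by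
    have e : |12 * m / Λ * Lv / r ^ 5| = 12 * m / (Λ * (r * r ^ 4)) * |Lv| := by
      rw [abs_div, abs_mul, abs_of_pos (by positivity : (0:ℝ) < 12 * m / Λ), abs_of_pos hr5]
      ring
    rw [e, div_div]
    refine mul_le_mul_of_nonneg_right
      (div_le_div₀ (by positivity) le_rfl (by positivity) ?_) (abs_nonneg _)
    nlinarith [mul_nonneg (mul_pos hΛ hr4).le (sub_nonneg.2 hr)]
  have hb7 : |-(18 * m * B / r ^ 6)| ≤ 18 * m / r₀ / r ^ 5 * |B| := by
    have e : |-(18 * m * B / r ^ 6)| = 18 * m / (r * r ^ 5) * |B| := by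
      rw [abs_neg, abs_div, abs_mul, abs_of_pos (by positivity : (0:ℝ) < 18 * m),
        abs_of_pos (by positivity : (0:ℝ) < r ^ 6)]
      ring
    rw [e, div_div]
    refine mul_le_mul_of_nonneg_right
      (div_le_div₀ (by positivity) le_rfl (by positivity) ?_) (abs_nonneg _)
    nlinarith [mul_nonneg hr5.le (sub_nonneg.2 hr)]
  have hb8 : |-(c / r ^ 4 * SL)| ≤ c / r ^ 4 * |SL| := by
    rw [abs_neg, abs_mul, abs_of_pos (by positivity : (0:ℝ) < c / r ^ 4)]
  have hb9 : |S3 / r ^ 5| ≤ 1 / r ^ 5 * |S3| := by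
    have e : |S3 / r ^ 5| = 1 / r ^ 5 * |S3| := by
      rw [abs_div, abs_of_pos hr5]
      ring
    exact e.le
  -- slot comparisons with the global constant
  have hsa2 : (3 + 6 * m / r₀) / (Λ * k) / r ^ 4 * |a2| ≤ C / r ^ 4 * |a2| := by
    have hco : (3 + 6 * m / r₀) / (Λ * k) ≤ C := by rw [hCdef]; linarith
    gcongr
  have hsl2 : c / k / r ^ 4 * |l2| ≤ C / r ^ 4 * |l2| := by
    have hco : c / k ≤ C := by rw [hCdef]; linarith
    gcongr
  have hsb2 : 1 / k / r ^ 5 * |b2| ≤ C / r ^ 5 * |b2| := by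
    have hco : 1 / k ≤ C := by rw [hCdef]; linarith
    gcongr
  have hsLv : 3 / Λ / r ^ 4 * |Lv| + 12 * m / (Λ * r₀) / r ^ 4 * |Lv| ≤ C / r ^ 4 * |Lv| := by
    have hco : 3 / Λ + 12 * m / (Λ * r₀) ≤ C := by rw [hCdef]; linarith
    calc 3 / Λ / r ^ 4 * |Lv| + 12 * m / (Λ * r₀) / r ^ 4 * |Lv|
        = (3 / Λ + 12 * m / (Λ * r₀)) / r ^ 4 * |Lv| := by ring
      _ ≤ C / r ^ 4 * |Lv| := by gcongr
  have hsB : 6 / r ^ 5 * |B| + 18 * m / r₀ / r ^ 5 * |B| ≤ C / r ^ 5 * |B| := by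
    have hco : 6 + 18 * m / r₀ ≤ C := by rw [hCdef]; linarith
    calc 6 / r ^ 5 * |B| + 18 * m / r₀ / r ^ 5 * |B|
        = (6 + 18 * m / r₀) / r ^ 5 * |B| := by ring
      _ ≤ C / r ^ 5 * |B| := by gcongr
  have hsSL : c / r ^ 4 * |SL| ≤ C / r ^ 4 * |SL| := by
    have hco : c ≤ C := by rw [hCdef]; linarith
    gcongr
  have hsS3 : 1 / r ^ 5 * |S3| ≤ C / r ^ 5 * |S3| := by
    have hco : (1:ℝ) ≤ C := by rw [hCdef]; linarith
    gcongr
  have htri := abs_add9'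
    ((3 - 6 * m / r) / (Λ * r ^ 2 * W) * a2)
    (-(c / (W * r ^ 2) * l2))
    (1 / (W * r ^ 3) * b2)
    (-(3 / (Λ * r ^ 4) * Lv))
    (6 * B / r ^ 5)
    (12 * m / Λ * Lv / r ^ 5)
    (-(18 * m * B / r ^ 6))
    (-(c / r ^ 4 * SL))
    (S3 / r ^ 5)
  have hexp4 : C / r ^ 4 * (|A| + |a2| + |Lv| + |l2| + |SL|)
      = C / r ^ 4 * |A| + C / r ^ 4 * |a2| + C / r ^ 4 * |Lv| + C / r ^ 4 * |l2|
        + C / r ^ 4 * |SL| := by ring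
  have hexp5 : C / r ^ 5 * (|B| + |b2| + |S3|)
      = C / r ^ 5 * |B| + C / r ^ 5 * |b2| + C / r ^ 5 * |S3| := by ring
  have hA0 : 0 ≤ C / r ^ 4 * |A| := by positivity
  linarith


set_option maxHeartbeats 2000000 in
/-- **Pointwise bound on the wave operator of the asymptotic solution.**
With `ψ_asymp = ψ₀ - (3/(2Λ)) r⁻² Δ̃ψ₀ + r⁻³ ψ₃`, one has
`|□_g ψ_asymp| ≤ C r⁻⁴ Σ_{|α|≤4}|∇̃^α ψ₀| + C r⁻⁵ Σ_{|α|≤2}|∇̃^α ψ₃|`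
for all `r ≥ r₀ > r_C`, with `C = C(Λ,m,r₀)` (here with the explicit
combinations of cylinder derivatives of `ψ₀` up to order 4 and of `ψ₃` up to
order 2 that occur). -/
theorem stmt_7 (Λ m r₀ : ℝ) (hΛ : 0 < Λ) (hm : 0 < m)
    (hsub : 3 * m * Real.sqrt Λ < 1) (hr₀ : 0 < r₀)
    (hw : ∀ s ≥ r₀, 0 < Λ * s ^ 2 / 3 - 1 + 2 * m / s)
    (ΔS : (ℝ → S2 → ℝ) →ₗ[ℝ] (ℝ → S2 → ℝ))
    (ψ0 ψ3 : ℝ → S2 → ℝ)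
    (hψ0 : ∀ ω : S2, ContDiff ℝ 4 (fun t => ψ0 t ω))
    (hψ0' : ∀ ω : S2, ContDiff ℝ 2 (fun t => ΔS ψ0 t ω))
    (hψ3 : ∀ ω : S2, ContDiff ℝ 2 (fun t => ψ3 t ω)) :
    ∃ C > (0 : ℝ), ∀ r ≥ r₀, ∀ (t : ℝ) (ω : S2),
      |BoxSdS Λ m ΔS
          (fun u t' ω' => ψ0 t' ω' - (3 / (2 * Λ)) * tLap Λ ΔS ψ0 t' ω' / u ^ 2
            + ψ3 t' ω' / u ^ 3) r t ω|
        ≤ C / r ^ 4 *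
            (|ψ0 t ω| + |tdd ψ0 t ω| + |tLap Λ ΔS ψ0 t ω|
              + |tdd (tLap Λ ΔS ψ0) t ω| + |ΔS (tLap Λ ΔS ψ0) t ω|)
          + C / r ^ 5 * (|ψ3 t ω| + |tdd ψ3 t ω| + |ΔS ψ3 t ω|) := by
  have hW₀ : 0 < Λ * r₀ ^ 2 / 3 - 1 + 2 * m / r₀ := hw r₀ le_rfl
  set k : ℝ := (Λ * r₀ ^ 2 / 3 - 1 + 2 * m / r₀) / r₀ ^ 2 with hkdef
  have hk : 0 < k := by rw [hkdef]; positivity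
  set c : ℝ := 3 / (2 * Λ) with hcdef
  have hc : 0 < c := by rw [hcdef]; positivity
  set C : ℝ := (3 + 6 * m / r₀) / (Λ * k) + c / k + 1 / k + 3 / Λ + 6 + 12 * m / (Λ * r₀)
      + 18 * m / r₀ + c + 1 with hCdef
  have hc1 : 0 < (3 + 6 * m / r₀) / (Λ * k) := div_pos (by positivity) (mul_pos hΛ hk)
  have hc2 : 0 < c / k := div_pos hc hk
  have hc3 : 0 < 1 / k := by positivity
  have hc4 : 0 < 3 / Λ := by positivity
  have hc6 : 0 < 12 * m / (Λ * r₀) := by positivity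
  have hc7 : 0 < 18 * m / r₀ := by positivity
  have hC : 0 < C := by rw [hCdef]; linarith
  have hC : 0 < C := by rw [hCdef]; linarith
  refine ⟨C, hC, ?_⟩
  intro r hr t ω
  have hrpos : 0 < r := lt_of_lt_of_le hr₀ hr
  have hrne : r ≠ 0 := hrpos.ne'
  have hWpos : 0 < Λ * r ^ 2 / 3 - 1 + 2 * m / r := hw r hr
  have hWk : k * r ^ 2 ≤ Λ * r ^ 2 / 3 - 1 + 2 * m / r :=
    w_lower_bound' Λ m r₀ hΛ hm hsub hr₀ hw r hr
  -- regularity of the profile functions in t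
  have hcd0 : ContDiff ℝ 2 (fun s => ψ0 s ω) := (hψ0 ω).of_le (by norm_num)
  have hcd3 : ContDiff ℝ 2 (fun s => ψ3 s ω) := hψ3 ω
  have hcdL : ContDiff ℝ 2 (fun s => tLap Λ ΔS ψ0 s ω) := by
    have h4 : ContDiff ℝ ((2 + 2 : ℕ) : WithTop ℕ∞) (fun t => ψ0 t ω) := by
      norm_num; exact hψ0 ω
    have h1 : ContDiff ℝ 2 (deriv (deriv (fun t => ψ0 t ω))) :=
      ContDiff.iterate_deriv' 2 2 h4
    show ContDiff ℝ 2 (fun s => (3 / Λ) * deriv (deriv (fun u => ψ0 u ω)) s + ΔS ψ0 s ω)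
    exact (contDiff_const.mul h1).add (hψ0' ω)
  -- abbreviations
  simp only [BoxSdS]
  set A : ℝ := ψ0 t ω with hA
  set B : ℝ := ψ3 t ω with hB
  set Lv : ℝ := tLap Λ ΔS ψ0 t ω with hLv
  set a2 : ℝ := tdd ψ0 t ω with ha2
  set l2 : ℝ := tdd (tLap Λ ΔS ψ0) t ω with hl2
  set b2 : ℝ := tdd ψ3 t ω with hb2
  set SL : ℝ := ΔS (tLap Λ ΔS ψ0) t ω with hSL
  set S3 : ℝ := ΔS ψ3 t ω with hS3
  -- Step 1: the second t-derivative of the asymptotic profile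
  have h1 : tdd (fun t' ω' => ψ0 t' ω' - c * tLap Λ ΔS ψ0 t' ω' / r ^ 2 + ψ3 t' ω' / r ^ 3) t ω
      = a2 + -(c / r ^ 2) * l2 + (r ^ 3)⁻¹ * b2 := by
    show deriv (deriv (fun s => ψ0 s ω - c * tLap Λ ΔS ψ0 s ω / r ^ 2 + ψ3 s ω / r ^ 3)) t = _
    rw [show (fun s => ψ0 s ω - c * tLap Λ ΔS ψ0 s ω / r ^ 2 + ψ3 s ω / r ^ 3)
        = (fun s => ψ0 s ω + -(c / r ^ 2) * tLap Λ ΔS ψ0 s ω + (r ^ 3)⁻¹ * ψ3 s ω) from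
      funext fun s => by ring]
    rw [deriv2_comb' (f := fun s => ψ0 s ω) (g := fun s => tLap Λ ΔS ψ0 s ω)
      (h := fun s => ψ3 s ω) (-(c / r ^ 2)) ((r ^ 3)⁻¹) hcd0 hcdL hcd3 t]
    rfl
  -- Step 2: the spherical Laplacian term
  have h2 : ΔS (fun t' ω' => ψ0 t' ω' - c * tLap Λ ΔS ψ0 t' ω' / r ^ 2 + ψ3 t' ω' / r ^ 3) t ω
      = (Lv - 3 / Λ * a2) + -(c / r ^ 2) * SL + (r ^ 3)⁻¹ * S3 := by
    have efn : (fun t' ω' => ψ0 t' ω' - c * tLap Λ ΔS ψ0 t' ω' / r ^ 2 + ψ3 t' ω' / r ^ 3)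
        = ψ0 + (-(c / r ^ 2)) • tLap Λ ΔS ψ0 + (r ^ 3)⁻¹ • ψ3 := by
      funext t' ω'
      simp only [Pi.add_apply, Pi.smul_apply, smul_eq_mul]
      ring
    rw [efn, map_add, map_add, map_smul, map_smul]
    simp only [Pi.add_apply, Pi.smul_apply, smul_eq_mul]
    have hS0 : ΔS ψ0 t ω = Lv - 3 / Λ * a2 := by
      have hLveq : Lv = 3 / Λ * a2 + ΔS ψ0 t ω := rfl
      linarith
    rw [hS0]
  -- Step 3: the radial derivative term
  have hEv : (fun s => s ^ 2 * (Λ * s ^ 2 / 3 - 1 + 2 * m / s)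
        * deriv (fun u => A - c * Lv / u ^ 2 + B / u ^ 3) s)
      =ᶠ[nhds r] (fun s => s ^ 2 * (Λ * s ^ 2 / 3 - 1 + 2 * m / s)
        * (2 * (c * Lv) / s ^ 3 - 3 * B / s ^ 4)) := by
    filter_upwards [eventually_ne_nhds hrne] with s hs
    rw [inner_deriv' A (c * Lv) B hs]
  rw [h1, h2, hEv.deriv_eq, outer_deriv' Λ m (c * Lv) B hrne]
  -- Step 4: algebraic regrouping
  have hBig : (Λ * r ^ 2 / 3 - 1 + 2 * m / r)⁻¹ * (a2 + -(c / r ^ 2) * l2 + (r ^ 3)⁻¹ * b2)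
        - 1 / r ^ 2 * (2 * (c * Lv) * Λ / 3 + 2 * (c * Lv) / r ^ 2
            - (6 * B + 8 * m * (c * Lv)) / r ^ 3 + 18 * m * B / r ^ 4)
        + 1 / r ^ 2 * ((Lv - 3 / Λ * a2) + -(c / r ^ 2) * SL + (r ^ 3)⁻¹ * S3)
      = (3 - 6 * m / r) / (Λ * r ^ 2 * (Λ * r ^ 2 / 3 - 1 + 2 * m / r)) * a2
        + -(c / ((Λ * r ^ 2 / 3 - 1 + 2 * m / r) * r ^ 2) * l2)
        + 1 / ((Λ * r ^ 2 / 3 - 1 + 2 * m / r) * r ^ 3) * b2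
        + -(3 / (Λ * r ^ 4) * Lv)
        + 6 * B / r ^ 5
        + 12 * m / Λ * Lv / r ^ 5
        + -(18 * m * B / r ^ 6)
        + -(c / r ^ 4 * SL)
        + S3 / r ^ 5 := by
    rw [hcdef]
    have hWeq : Λ * r ^ 2 / 3 - 1 + 2 * m / r = (Λ * r ^ 3 - 3 * r + 6 * m) / (3 * r) := by
      field_simp; ring
    have hN : Λ * r ^ 3 - 3 * r + 6 * m ≠ 0 := by
      rw [hWeq] at hWpos
      rcases div_pos_iff.mp hWpos with ⟨h1, _⟩ | ⟨_, h2⟩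
      · exact h1.ne'
      · nlinarith
    rw [hWeq, inv_div]
    have hN' : r * (r ^ 2 * Λ - 3) + 6 * m ≠ 0 := fun h => hN (by linear_combination h)
    field_simp
    ring
  rw [hBig]
  exact total_bound' Λ m r₀ r k c C (Λ * r ^ 2 / 3 - 1 + 2 * m / r) A a2 Lv l2 SL B b2 S3
    hΛ hm hr₀ hr hrpos hk hc hWpos hWk hCdef

end
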